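/- Let m ≥ 1 be an integer, set n = 3m, and let t₁, t₂ be real numbers with t₁ ≥ n² and t₂ ≥ n². Consider the n-point set P = {(0,ν) : ν = 1,…,m} ∪ {(t₁,ν) : ν = 1,…,m} ∪ {(t₁+t₂,ν) : ν = 1,…,m} ⊂ ℝ². Then P is separated, and the number of unordered pairs {p,q} of distinct points of P whose Euclidean distance lies in [t₁, t₁+1] ∪ [t₂, t₂+1] ∪ [t₁+t₂, t₁+t₂+1] is at least 3m² = ⌊n²/3⌋. (In particular, if one of the numbers t₁, t₂, t₃ equals the sum of the other two, a separated n-point set can realize ⌊n²/3⌋ pairs with nearly equal distances among t₁, t₂, t₃.) -/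

import Mathlib

/-- The number of unordered pairs `{p, q}` of distinct points of the finite set `P ⊂ ℝ²`
whose Euclidean distance lies in the set `S ⊆ ℝ`. -/
noncomputable def nearPairs (P : Finset (EuclideanSpace ℝ (Fin 2))) (S : Set ℝ) : ℕ :=
  Set.ncard {e : Sym2 (EuclideanSpace ℝ (Fin 2)) |
    ¬ e.IsDiag ∧ (∀ p ∈ e, p ∈ P) ∧
      Sym2.lift ⟨fun p q => dist p q, fun _ _ => dist_comm _ _⟩ e ∈ S}

open scoped Classical

/-- The point `(x, y) ∈ ℝ²` as an element of `EuclideanSpace ℝ (Fin 2)`. -/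
noncomputable def pt (x y : ℝ) : EuclideanSpace ℝ (Fin 2) :=
  (WithLp.equiv 2 (Fin 2 → ℝ)).symm ![x, y]

lemma dist_pt (a b c d : ℝ) :
    dist (pt a b) (pt c d) = Real.sqrt ((a-c)^2+(b-d)^2) := by
  rw [EuclideanSpace.dist_eq]
  simp [pt, Fin.sum_univ_two, Real.dist_eq, sq_abs]

lemma pt_inj {a b c d : ℝ} (h : pt a b = pt c d) : a = c ∧ b = d := by
  have h0 := congrArg (fun v => v 0) h
  have h1 := congrArg (fun v => v 1) h
  simp [pt] at h0 h1
  exact ⟨h0, h1⟩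

lemma abs_fst_le_dist (a b c d : ℝ) : |a - c| ≤ dist (pt a b) (pt c d) := by
  rw [dist_pt, ← Real.sqrt_sq_eq_abs]
  exact Real.sqrt_le_sqrt (by nlinarith [sq_nonneg (b-d)])

lemma abs_snd_le_dist (a b c d : ℝ) : |b - d| ≤ dist (pt a b) (pt c d) := by
  rw [dist_pt, ← Real.sqrt_sq_eq_abs]
  exact Real.sqrt_le_sqrt (by nlinarith [sq_nonneg (a-c)])

lemma dist_in_Icc (a t : ℝ) (m ν μ : ℕ) (ht : (m:ℝ)^2 ≤ t)
    (hν : ν ∈ Finset.Icc 1 m) (hμ : μ ∈ Finset.Icc 1 m) :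
    dist (pt a (ν:ℝ)) (pt (a+t) (μ:ℝ)) ∈ Set.Icc t (t+1) := by
  simp only [Finset.mem_Icc] at hν hμ
  have hν1 : (1:ℝ) ≤ ν := by exact_mod_cast hν.1
  have hν2 : (ν:ℝ) ≤ m := by exact_mod_cast hν.2
  have hμ1 : (1:ℝ) ≤ μ := by exact_mod_cast hμ.1
  have hμ2 : (μ:ℝ) ≤ m := by exact_mod_cast hμ.2
  have ht0 : 0 ≤ t := le_trans (by positivity) ht
  rw [dist_pt]
  have he : (a - (a+t))^2 = t^2 := by ring_nf
  constructor
  · rw [he]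
    calc t = Real.sqrt (t^2) := (Real.sqrt_sq ht0).symm
    _ ≤ _ := Real.sqrt_le_sqrt (by nlinarith [sq_nonneg ((ν:ℝ)-μ)])
  · calc Real.sqrt _ ≤ Real.sqrt ((t+1)^2) :=
        Real.sqrt_le_sqrt (by rw [he]; nlinarith)
    _ = t + 1 := Real.sqrt_sq (by linarith)

/-- Left column x-coordinate for the `i`-th of the three pair families. -/
noncomputable def fx (t₁ : ℝ) (i : ℕ) : ℝ := if i = 1 then t₁ else 0

/-- Right column x-coordinate for the `i`-th of the three pair families. -/
noncomputable def sx (t₁ t₂ : ℝ) (i : ℕ) : ℝ := if i = 0 then t₁ else t₁ + t₂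

theorem three_columns_example (m : ℕ) (hm : 1 ≤ m) (n : ℕ) (hn : n = 3 * m)
    (t₁ t₂ : ℝ) (ht₁ : (n : ℝ)^2 ≤ t₁) (ht₂ : (n : ℝ)^2 ≤ t₂)
    (P : Finset (EuclideanSpace ℝ (Fin 2)))
    (hP : P = ((Finset.Icc 1 m).image fun ν : ℕ => pt 0 (ν : ℝ)) ∪
              ((Finset.Icc 1 m).image fun ν : ℕ => pt t₁ (ν : ℝ)) ∪
              ((Finset.Icc 1 m).image fun ν : ℕ => pt (t₁ + t₂) (ν : ℝ))) :
    (∀ p ∈ P, ∀ q ∈ P, p ≠ q → 1 ≤ dist p q) ∧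
    3 * m ^ 2 ≤ nearPairs P
      (Set.Icc t₁ (t₁ + 1) ∪ Set.Icc t₂ (t₂ + 1) ∪ Set.Icc (t₁ + t₂) (t₁ + t₂ + 1)) ∧
    3 * m ^ 2 = n ^ 2 / 3 := by
  subst hn
  have hm' : (1:ℝ) ≤ m := by exact_mod_cast hm
  have h9₁ : 9 * (m:ℝ)^2 ≤ t₁ := by push_cast at ht₁; nlinarith
  have h9₂ : 9 * (m:ℝ)^2 ≤ t₂ := by push_cast at ht₂; nlinarith
  have hmt₁ : (m:ℝ)^2 ≤ t₁ := by nlinarith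
  have hmt₂ : (m:ℝ)^2 ≤ t₂ := by nlinarith
  have hmt₃ : (m:ℝ)^2 ≤ t₁ + t₂ := by nlinarith
  have ht₁1 : (1:ℝ) ≤ t₁ := by nlinarith
  have ht₂1 : (1:ℝ) ≤ t₂ := by nlinarith
  refine ⟨?_, ?_, ?_⟩
  · -- separation
    have key : ∀ x x' : ℝ, x ∈ ({0, t₁, t₁+t₂} : Set ℝ) → x' ∈ ({0, t₁, t₁+t₂} : Set ℝ) →
        ∀ ν μ : ℕ, pt x (ν:ℝ) ≠ pt x' (μ:ℝ) → 1 ≤ dist (pt x (ν:ℝ)) (pt x' (μ:ℝ)) := by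
      intro x x' hx1 hx2 ν μ hne
      by_cases hx : x = x'
      · subst hx
        have hνμ : ν ≠ μ := by
          intro h; exact hne (by rw [h])
        have h1 : (1:ℤ) ≤ |(ν:ℤ) - μ| := by
          refine Int.one_le_abs (sub_ne_zero.mpr ?_)
          exact_mod_cast hνμ
        have h2 : (1:ℝ) ≤ |(ν:ℝ) - μ| := by
          calc (1:ℝ) = ((1:ℤ):ℝ) := by norm_num
          _ ≤ |((ν:ℤ) - μ : ℤ)| := by exact_mod_cast h1
          _ = |(ν:ℝ) - μ| := by push_cast [Int.cast_abs]; ring_nf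
        exact le_trans h2 (abs_snd_le_dist _ _ _ _)
      · have habs : 1 ≤ |x - x'| := by
          simp only [Set.mem_insert_iff, Set.mem_singleton_iff] at hx1 hx2
          rcases hx1 with rfl | rfl | rfl <;> rcases hx2 with rfl | rfl | rfl <;>
            first
              | exact absurd rfl hx
              | (rw [le_abs]; left; linarith)
              | (rw [le_abs]; right; linarith)
        exact le_trans habs (abs_fst_le_dist _ _ _ _)
    intro p hp q hq hne
    rw [hP] at hp hq
    simp only [Finset.mem_union, Finset.mem_image] at hp hq
    rcases hp with (⟨ν, hν, rfl⟩ | ⟨ν, hν, rfl⟩) | ⟨ν, hν, rfl⟩ <;>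
      rcases hq with (⟨μ, hμ, rfl⟩ | ⟨μ, hμ, rfl⟩) | ⟨μ, hμ, rfl⟩ <;>
      exact key _ _ (by simp) (by simp) ν μ hne
  · -- counting
    rw [nearPairs]
    set G : ℕ × ℕ × ℕ → Sym2 (EuclideanSpace ℝ (Fin 2)) :=
      fun w => s(pt (fx t₁ w.1) (w.2.1:ℝ), pt (sx t₁ t₂ w.1) (w.2.2:ℝ)) with hG
    set T : Finset (ℕ × ℕ × ℕ) :=
      Finset.range 3 ×ˢ (Finset.Icc 1 m ×ˢ Finset.Icc 1 m) with hT
    have hinj : Set.InjOn G ↑T := by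
      rintro ⟨i, ν, μ⟩ ha ⟨j, ν', μ'⟩ hb heq
      simp only [hT, Finset.coe_product, Set.mem_prod, Finset.mem_coe,
        Finset.mem_range] at ha hb
      obtain ⟨hi, -⟩ := ha
      obtain ⟨hj, -⟩ := hb
      simp only [hG, Sym2.eq_iff] at heq
      rcases heq with ⟨e1, e2⟩ | ⟨e1, e2⟩
      · obtain ⟨hx1, hy1⟩ := pt_inj e1
        obtain ⟨hx2, hy2⟩ := pt_inj e2
        have hνν : ν = ν' := by exact_mod_cast hy1
        have hμμ : μ = μ' := by exact_mod_cast hy2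
        have hij : i = j := by
          interval_cases i <;> interval_cases j <;>
            norm_num [fx, sx] at hx1 hx2 ⊢ <;> linarith
        simp [hij, hνν, hμμ]
      · obtain ⟨hx1, hy1⟩ := pt_inj e1
        obtain ⟨hx2, hy2⟩ := pt_inj e2
        exfalso
        interval_cases i <;> interval_cases j <;>
          norm_num [fx, sx] at hx1 hx2 <;> linarith
    have hsub : ↑(T.image G) ⊆
        {e : Sym2 (EuclideanSpace ℝ (Fin 2)) |
          ¬ e.IsDiag ∧ (∀ p ∈ e, p ∈ P) ∧
            Sym2.lift ⟨fun p q => dist p q, fun _ _ => dist_comm _ _⟩ e ∈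
              (Set.Icc t₁ (t₁ + 1) ∪ Set.Icc t₂ (t₂ + 1) ∪
                Set.Icc (t₁ + t₂) (t₁ + t₂ + 1))} := by
      intro e he
      simp only [Finset.coe_image, Set.mem_image, Finset.mem_coe] at he
      obtain ⟨⟨i, ν, μ⟩, hmem, rfl⟩ := he
      simp only [hT, Finset.mem_product, Finset.mem_range] at hmem
      obtain ⟨hi, hν, hμ⟩ := hmem
      refine ⟨?_, ?_, ?_⟩
      · simp only [hG, Sym2.mk_isDiag_iff]
        intro h
        have hx := (pt_inj h).1
        interval_cases i <;> norm_num [fx, sx] at hx <;> linarith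
      · intro p hp
        simp only [hG, Sym2.mem_iff] at hp
        rw [hP]
        simp only [Finset.mem_union, Finset.mem_image]
        rcases hp with rfl | rfl
        · interval_cases i <;> norm_num [fx, sx]
          · exact Or.inl (Or.inl ⟨ν, by simpa using hν, rfl⟩)
          · exact Or.inl (Or.inr ⟨ν, by simpa using hν, rfl⟩)
          · exact Or.inl (Or.inl ⟨ν, by simpa using hν, rfl⟩)
        · interval_cases i <;> norm_num [fx, sx]
          · exact Or.inl (Or.inr ⟨μ, by simpa using hμ, rfl⟩)
          · exact Or.inr ⟨μ, by simpa using hμ, rfl⟩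
          · exact Or.inr ⟨μ, by simpa using hμ, rfl⟩
      · simp only [hG, Sym2.lift_mk]
        interval_cases i <;> norm_num [fx, sx]
        · exact Or.inl (Or.inl (by simpa using dist_in_Icc 0 t₁ m ν μ hmt₁ hν hμ))
        · exact Or.inl (Or.inr (dist_in_Icc t₁ t₂ m ν μ hmt₂ hν hμ))
        · exact Or.inr (by simpa using dist_in_Icc 0 (t₁+t₂) m ν μ hmt₃ hν hμ)
    have hfin : Set.Finite
        {e : Sym2 (EuclideanSpace ℝ (Fin 2)) |
          ¬ e.IsDiag ∧ (∀ p ∈ e, p ∈ P) ∧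
            Sym2.lift ⟨fun p q => dist p q, fun _ _ => dist_comm _ _⟩ e ∈
              (Set.Icc t₁ (t₁ + 1) ∪ Set.Icc t₂ (t₂ + 1) ∪
                Set.Icc (t₁ + t₂) (t₁ + t₂ + 1))} := by
      apply Set.Finite.subset
        (Set.Finite.image Sym2.mk.uncurry ((P.finite_toSet).prod (P.finite_toSet)))
      intro e
      induction e using Sym2.ind with
      | _ a b =>
        rintro ⟨-, hmem, -⟩
        exact ⟨(a, b), ⟨hmem a (Sym2.mem_mk_left a b), hmem b (Sym2.mem_mk_right a b)⟩, rfl⟩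
    have hcard : (T.image G).card = 3 * m ^ 2 := by
      rw [Finset.card_image_of_injOn hinj]
      simp only [hT, Finset.card_product, Finset.card_range, Nat.card_Icc,
        Nat.add_sub_cancel]
      ring
    calc 3 * m ^ 2 = (T.image G).card := hcard.symm
    _ = (↑(T.image G) : Set _).ncard := (Set.ncard_coe_finset _).symm
    _ ≤ _ := Set.ncard_le_ncard hsub hfin
  · rw [show (3*m)^2 = 3*m^2*3 from by ring, Nat.mul_div_cancel _ (by norm_num)]
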